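/- Let ρ be a partial assignment and C_reason: Σ_{i∈N} a_i ℓ_i ≥ b a normalized pseudo-Boolean constraint that propagates a literal ℓ_r to 1 under ρ (i.e., ℓ_r is free and slack(C_reason,ρ) < a_r). Let W := {i ∈ N : ρ(ℓ_i) ≠ 0 and a_r does not divide a_i}. Then the constraint obtained from C_reason by weakening on all literals ℓ_i with i ∈ W and then applying the Division cut with divisor d = a_r has slack at most 0 under ρ. -/

import Mathlib

namespace PB

/-- The slack of the constraint `Σ_i a_i ℓ_i ≥ b` under the partial assignment `ρ`. -/
def slack {ι : Type*} [Fintype ι] (a : ι → ℤ) (pol : ι → Bool) (b : ℤ)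
    (ρ : ι → Option Bool) : ℤ :=
  (∑ i ∈ Finset.univ.filter fun i => ρ i ≠ some (!(pol i)), a i) - b

/-- Coefficients after weakening `Σ_i a_i ℓ_i ≥ b` on every literal in
`W = {i : ρ(ℓ_i) ≠ 0 and a_r ∤ a_i}`: these coefficients are set to `0`. -/
def weakWCoef {ι : Type*} (a : ι → ℤ) (pol : ι → Bool) (ρ : ι → Option Bool)
    (r : ι) (i : ι) : ℤ :=
  if ρ i ≠ some (!(pol i)) ∧ ¬ a r ∣ a i then 0 else a i

/-- Degree after weakening `Σ_i a_i ℓ_i ≥ b` on every literal in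
`W = {i : ρ(ℓ_i) ≠ 0 and a_r ∤ a_i}`. -/
def weakWRhs {ι : Type*} [Fintype ι] (a : ι → ℤ) (pol : ι → Bool) (b : ℤ)
    (ρ : ι → Option Bool) (r : ι) : ℤ :=
  b - ∑ i ∈ Finset.univ.filter fun i => ρ i ≠ some (!(pol i)) ∧ ¬ a r ∣ a i, a i


lemma ceil_div_of_dvd {d m : ℤ} (hd : d ≠ 0) (h : d ∣ m) :
    ⌈(m : ℚ) / (d : ℚ)⌉ = m / d := by
  obtain ⟨c, rfl⟩ := h
  rw [Int.mul_ediv_cancel_left _ hd]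
  push_cast
  rw [mul_comm, mul_div_assoc, div_self (by exact_mod_cast hd), mul_one, Int.ceil_intCast]

/-- Let `ρ` be a partial assignment and `C : Σ_i a_i ℓ_i ≥ b` a
normalized PB constraint that propagates the literal `ℓ_r` to 1 under `ρ` (i.e. `ℓ_r`
is free and `slack(C,ρ) < a_r`).  Then the constraint obtained from `C` by weakening on
all literals `ℓ_i` with `i ∈ W := {i : ρ(ℓ_i) ≠ 0 and a_r ∤ a_i}` and then applying the
Division cut with divisor `d = a_r` (which must be a positive integer) has slack at most
`0` under `ρ`. -/
theorem division_reduction_slack_nonpos {ι : Type*} [Fintype ι]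
    (a : ι → ℤ) (pol : ι → Bool) (b : ℤ) (ρ : ι → Option Bool) (r : ι)
    (ha : ∀ i, 0 ≤ a i) (hb : 0 ≤ b)
    (hfree : ρ r = none)
    (hprop : slack a pol b ρ < a r)
    (har : 0 < a r) :
    slack (fun i => ⌈(weakWCoef a pol ρ r i : ℚ) / (a r : ℚ)⌉) pol
      ⌈(weakWRhs a pol b ρ r : ℚ) / (a r : ℚ)⌉ ρ ≤ 0 := by
  classical
  set d := a r with hd
  set S : Finset ι := Finset.univ.filter (fun i => ρ i ≠ some (!(pol i))) with hS
  have hdne : d ≠ 0 := har.ne'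
  have hdQ : (0:ℚ) < (d:ℚ) := by exact_mod_cast har
  set M := ∑ i ∈ S.filter (fun i => d ∣ a i), a i with hM
  set N := ∑ i ∈ S.filter (fun i => ¬ d ∣ a i), a i with hN
  set k := ∑ i ∈ S.filter (fun i => d ∣ a i), a i / d with hk
  have hMk : M = d * k := by
    rw [hM, hk, Finset.mul_sum]
    refine Finset.sum_congr rfl fun i hi => ?_
    simp only [Finset.mem_filter] at hi
    exact (Int.mul_ediv_cancel' hi.2).symm
  have hMN : ∑ i ∈ S, a i = M + N := by
    rw [hM, hN]
    exact (Finset.sum_filter_add_sum_filter_not S _ _).symm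
  have hWfilter : (Finset.univ.filter fun i => ρ i ≠ some (!(pol i)) ∧ ¬ a r ∣ a i)
      = S.filter (fun i => ¬ d ∣ a i) := by
    rw [hS, Finset.filter_filter]
  have hrhs : weakWRhs a pol b ρ r = b - N := by
    rw [weakWRhs, hWfilter, hN]
  have hsum : ∑ i ∈ S, ⌈(weakWCoef a pol ρ r i : ℚ) / (d : ℚ)⌉ = k := by
    rw [← Finset.sum_filter_add_sum_filter_not S (fun i => d ∣ a i)]
    have h1 : ∑ i ∈ S.filter (fun i => d ∣ a i),
        ⌈(weakWCoef a pol ρ r i : ℚ) / (d : ℚ)⌉ = k := by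
      rw [hk]
      refine Finset.sum_congr rfl fun i hi => ?_
      simp only [Finset.mem_filter] at hi
      have hc : weakWCoef a pol ρ r i = a i := by
        simp [weakWCoef, ← hd, hi.2]
      rw [hc, ceil_div_of_dvd hdne hi.2]
    have h2 : ∑ i ∈ S.filter (fun i => ¬ d ∣ a i),
        ⌈(weakWCoef a pol ρ r i : ℚ) / (d : ℚ)⌉ = 0 := by
      refine Finset.sum_eq_zero fun i hi => ?_
      simp only [Finset.mem_filter, hS, Finset.mem_univ, true_and] at hi
      have hc : weakWCoef a pol ρ r i = 0 := by
        simp [weakWCoef, ← hd, hi.1, hi.2]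
      rw [hc]
      simp
    rw [h1, h2, add_zero]
  have hslack : ∑ i ∈ S, a i - b < d := hprop
  have hlb : M - d < weakWRhs a pol b ρ r := by
    rw [hrhs]
    omega
  have hceil : k ≤ ⌈(weakWRhs a pol b ρ r : ℚ) / (d : ℚ)⌉ := by
    have : (k - 1 : ℤ) < ⌈(weakWRhs a pol b ρ r : ℚ) / (d : ℚ)⌉ := by
      rw [Int.lt_ceil, lt_div_iff₀ hdQ]
      have : (d * (k - 1) : ℤ) < weakWRhs a pol b ρ r := by
        have : d * (k-1) = M - d := by rw [hMk]; ring
        omega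
      push_cast
      calc ((k:ℚ) - 1) * d = ((d * (k-1) : ℤ) : ℚ) := by push_cast; ring
        _ < _ := by exact_mod_cast this
    omega
  show (∑ i ∈ S, ⌈(weakWCoef a pol ρ r i : ℚ) / (d : ℚ)⌉)
      - ⌈(weakWRhs a pol b ρ r : ℚ) / (d : ℚ)⌉ ≤ 0
  rw [hsum]
  omega


end PB
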